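/- arXiv:1903.09444 — 2 statements merged into one kernel-verified Lean document; each statement's English description precedes it below -/
import Mathlib

section
/- Let φ be a perfect 2-coloring of Ci_∞(D_n) with positive outer degrees b, c satisfying b + c = 2n - 1. Then for every integer i with φ(i) ≠ φ(i+2), one has φ(i-2n+1) = φ(i) and φ(i+2n+1) = φ(i+2). -/
/-- Neighborhood of `i` in the infinite circulant graph `Ci_∞(D_n)`,
`D_n = {±1, ±3, …, ±(2n-1)}`: the integers at odd distance less than `2n` from `i`. -/
noncomputable def nbrs (n : ℕ) (i : ℤ) : Finset ℤ :=
  (Finset.Icc (i - (2*(n:ℤ) - 1)) (i + (2*(n:ℤ) - 1))).filter (fun j => Odd (j - i))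

/-- `φ` is a perfect 2-coloring of `Ci_∞(D_n)` with outer degrees `(b, c)`:
every vertex of color 0 (black) has exactly `b` neighbors of color 1 (white), and
every vertex of color 1 has exactly `c` neighbors of color 0. -/
def Perfect2 (n : ℕ) (φ : ℤ → Fin 2) (b c : ℕ) : Prop :=
  (∀ i, φ i = 0 → ((nbrs n i).filter (fun j => φ j = 1)).card = b) ∧
  (∀ i, φ i = 1 → ((nbrs n i).filter (fun j => φ j = 0)).card = c)

lemma mem_nbrs {n : ℕ} {i j : ℤ} :
    j ∈ nbrs n i ↔ i - (2*(n:ℤ) - 1) ≤ j ∧ j ≤ i + (2*(n:ℤ) - 1) ∧ (j - i) % 2 = 1 := by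
  simp [nbrs, Finset.mem_filter, Finset.mem_Icc, Int.odd_iff, and_assoc]

lemma card_nbrs (n : ℕ) (i : ℤ) : (nbrs n i).card = 2*n := by
  induction n with
  | zero =>
    apply Finset.card_eq_zero.mpr
    ext j
    simp only [mem_nbrs, Finset.notMem_empty, iff_false, not_and]
    intro h1 h2
    omega
  | succ n ih =>
    have hx : nbrs (n+1) i = insert (i - (2*(n:ℤ)+1)) (insert (i + (2*(n:ℤ)+1)) (nbrs n i)) := by
      ext j
      simp only [mem_nbrs, Finset.mem_insert]
      push_cast
      omega
    have h1 : (i : ℤ) + (2*(n:ℤ)+1) ∉ nbrs n i := by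
      simp only [mem_nbrs, not_and]
      intro _ h2
      omega
    have h2 : (i : ℤ) - (2*(n:ℤ)+1) ∉ insert (i + (2*(n:ℤ)+1)) (nbrs n i) := by
      simp only [Finset.mem_insert, mem_nbrs, not_or, not_and]
      constructor
      · omega
      · intro h _; omega
    rw [hx, Finset.card_insert_of_notMem h2, Finset.card_insert_of_notMem h1, ih]
    omega

lemma filter_card_insert (p : ℤ → Prop) [DecidablePred p] {a : ℤ} {s : Finset ℤ}
    (ha : a ∉ s) :
    ((insert a s).filter p).card = (s.filter p).card + if p a then 1 else 0 := by
  rw [Finset.filter_insert]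
  split
  · rw [Finset.card_insert_of_notMem (fun hm => ha (Finset.mem_of_mem_filter _ hm))]
  · omega

lemma filter_total (φ : ℤ → Fin 2) (t : Finset ℤ) :
    (t.filter (fun j => φ j = 1)).card + (t.filter (fun j => φ j = 0)).card = t.card := by
  have : t.filter (fun j => φ j = 0) = t.filter (fun j => ¬ (φ j = 1)) := by
    apply Finset.filter_congr
    intro j _
    have : ∀ v : Fin 2, (v = 0) ↔ ¬ (v = 1) := by decide
    exact this (φ j)
  rw [this, Finset.card_filter_add_card_filter_not]

/-- If `b + c = 2n-1` and `φ(i) ≠ φ(i+2)`, then `φ(i-2n+1) = φ(i)`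
and `φ(i+2n+1) = φ(i+2)`. -/
theorem neq_pattern_minus (n b c : ℕ) (hn : 0 < n) (hb : 0 < b) (hc : 0 < c)
    (hbc : b + c = 2*n - 1)
    (φ : ℤ → Fin 2) (hφ : Perfect2 n φ b c)
    (i : ℤ) (h : φ i ≠ φ (i + 2)) :
    φ (i - 2*(n:ℤ) + 1) = φ i ∧ φ (i + 2*(n:ℤ) + 1) = φ (i + 2) := by
  obtain ⟨hP0, hP1⟩ := hφ
  set x : ℤ := i - 2*(n:ℤ) + 1 with hxdef
  set y : ℤ := i + 2*(n:ℤ) + 1 with hydef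
  set S : Finset ℤ := (nbrs n i).erase x with hSdef
  have hxA : x ∈ nbrs n i := by
    rw [mem_nbrs]
    refine ⟨by omega, by omega, by omega⟩
  have hA : nbrs n i = insert x S := (Finset.insert_erase hxA).symm
  have hxS : x ∉ S := Finset.notMem_erase _ _
  have hB : nbrs n (i+2) = insert y S := by
    ext j
    simp only [mem_nbrs, Finset.mem_insert, hSdef, Finset.mem_erase, mem_nbrs, hxdef, hydef]
    omega
  have hyS : y ∉ S := by
    intro hy
    have := (Finset.mem_erase.mp hy).2
    rw [mem_nbrs] at this
    omega
  have cardA : (nbrs n i).card = 2*n := card_nbrs n i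
  have cardS : S.card + 1 = 2*n := by
    rw [hSdef, Finset.card_erase_of_mem hxA, cardA]
    have : 1 ≤ 2*n := by omega
    omega
  -- counts on S
  set WS := (S.filter (fun j => φ j = 1)).card with hWS
  set BS := (S.filter (fun j => φ j = 0)).card with hBS
  have totS : WS + BS = S.card := by
    rw [hWS, hBS, add_comm]
    have := filter_total φ S
    omega
  have hfin : ∀ v : Fin 2, v = 0 ∨ v = 1 := by decide
  rcases hfin (φ i) with hi0 | hi1
  · -- φ i = 0, hence φ (i+2) = 1
    have hi2 : φ (i+2) = 1 := by
      rcases hfin (φ (i+2)) with h2 | h2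
      · exact absurd (hi0.trans h2.symm) h
      · exact h2
    have e1 : WS + (if φ x = 1 then 1 else 0) = b := by
      have := hP0 i hi0
      rw [hA, filter_card_insert _ hxS] at this
      exact this
    have e2 : BS + (if φ y = 0 then 1 else 0) = c := by
      have := hP1 (i+2) hi2
      rw [hB, filter_card_insert _ hyS] at this
      exact this
    rw [hi0, hi2]
    rcases hfin (φ x) with hx0 | hx1
    · rcases hfin (φ y) with hy0 | hy1
      · -- contradiction: WS = b, BS + 1 = c, WS + BS = 2n - 1, b + c = 2n-1 ⇒ c = c+1? check
        simp [hx0, hy0] at e1 e2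
        omega
      · exact ⟨hx0, hy1⟩
    · -- φ x = 1 contributes; show contradiction
      exfalso
      simp [hx1] at e1
      rcases hfin (φ y) with hy0 | hy1
      · simp [hy0] at e2; omega
      · simp [hy1] at e2; omega
  · -- φ i = 1, hence φ (i+2) = 0
    have hi2 : φ (i+2) = 0 := by
      rcases hfin (φ (i+2)) with h2 | h2
      · exact h2
      · exact absurd (hi1.trans h2.symm) h
    have e1 : BS + (if φ x = 0 then 1 else 0) = c := by
      have := hP1 i hi1
      rw [hA, filter_card_insert _ hxS] at this
      exact this
    have e2 : WS + (if φ y = 1 then 1 else 0) = b := by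
      have := hP0 (i+2) hi2
      rw [hB, filter_card_insert _ hyS] at this
      exact this
    rw [hi1, hi2]
    rcases hfin (φ x) with hx0 | hx1
    · exfalso
      simp [hx0] at e1
      rcases hfin (φ y) with hy0 | hy1
      · simp [hy0] at e2; omega
      · simp [hy1] at e2; omega
    · rcases hfin (φ y) with hy0 | hy1
      · exact ⟨hx1, hy0⟩
      · exfalso
        simp [hx1, hy1] at e1 e2
        omega
end

section
/- For any positive integer n and any b with 0 < b < 2n, the periodic coloring of ℤ with period length 4n in which each of the residue-class pairs is colored so that among residues {0,2,...,4n-2} exactly b are white and among {1,3,...,4n-1} exactly b are white, yields a perfect 2-coloring of Ci_∞(D_n) with parameter matrix ((2n-b, b), (2n-b, b)). -/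
lemma nbrs_eq_image (n : ℕ) (i : ℤ) :
    nbrs n i = Finset.image (fun t : ℕ => i - (2*(n:ℤ) - 1) + 2*t) (Finset.range (2*n)) := by
  ext j
  simp only [nbrs, Finset.mem_filter, Finset.mem_Icc, Finset.mem_image, Finset.mem_range,
    Int.odd_iff]
  constructor
  · rintro ⟨⟨h1, h2⟩, h3⟩
    exact ⟨(j - i + 2*n - 1).toNat / 2, by omega, by omega⟩
  · rintro ⟨t, ht, rfl⟩
    exact ⟨⟨by omega, by omega⟩, by omega⟩

lemma parity_count (m : ℕ) :
    (((Finset.range (2*m)).filter (fun k => Even k)).card = m) ∧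
    (((Finset.range (2*m)).filter (fun k => Odd k)).card = m) := by
  induction m with
  | zero => simp
  | succ m ih =>
    have h : 2*(m+1) = (2*m) + 1 + 1 := by ring
    rw [h, Finset.range_add_one, Finset.range_add_one, Finset.filter_insert, Finset.filter_insert,
      Finset.filter_insert, Finset.filter_insert]
    have he : Even (2*m) := even_two_mul m
    have ho : Odd (2*m+1) := ⟨m, by ring⟩
    have hne : ¬ Even (2*m+1) := by simp [Nat.even_add_one, he]
    have hno : ¬ Odd (2*m) := Nat.not_odd_iff_even.mpr he
    rw [if_neg hne, if_pos he, if_pos ho, if_neg hno]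
    rw [Finset.card_insert_of_notMem (by simp), Finset.card_insert_of_notMem (by simp)]
    omega

lemma count_white (n b : ℕ) (φ : ℤ → Fin 2)
    (hmod : ∀ j : ℤ, φ (j % (4*(n:ℤ))) = φ j)
    (q : ℕ → Prop) [DecidablePred q]
    (hcount : ((Finset.range (4*n)).filter (fun k => q k ∧ φ (k:ℤ) = 1)).card = b)
    (hqcard : ((Finset.range (4*n)).filter q).card = 2*n)
    (i : ℤ)
    (hpar : ∀ j ∈ nbrs n i, ∀ k : ℕ, (k:ℤ) = j % (4*(n:ℤ)) → q k)
    (hn : 0 < n) :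
    ((nbrs n i).filter (fun j => φ j = 1)).card = b := by
  classical
  set c : ℤ := 4*(n:ℤ) with hc
  have hcpos : (0:ℤ) < c := by positivity
  set f : ℤ → ℕ := fun j => (j % c).toNat with hf
  have hfval : ∀ j : ℤ, ((f j : ℤ)) = j % c := fun j =>
    Int.toNat_of_nonneg (Int.emod_nonneg j (by positivity))
  have hφf : ∀ j : ℤ, φ ((f j : ℤ)) = φ j := by
    intro j; rw [hfval]; exact hmod j
  -- injectivity of f on nbrs
  have hinj : Set.InjOn f (nbrs n i) := by
    intro j1 h1 j2 h2 hfeq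
    rw [Finset.mem_coe] at h1 h2
    simp only [nbrs, Finset.mem_filter, Finset.mem_Icc] at h1 h2
    have hm : j1 % c = j2 % c := by rw [← hfval j1, ← hfval j2, hfeq]
    obtain ⟨k, hk⟩ := Int.ModEq.dvd hm
    have hk0 : k = 0 := by
      rcases lt_trichotomy k 0 with h | h | h
      · exfalso
        have : c * k ≤ c * (-1) := mul_le_mul_of_nonneg_left (by omega) (le_of_lt hcpos)
        have hb1 := h1.1.1; have hb2 := h2.1.2
        omega
      · exact h
      · exfalso
        have : c * 1 ≤ c * k := mul_le_mul_of_nonneg_left (by omega) (le_of_lt hcpos)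
        have hb1 := h1.1.2; have hb2 := h2.1.1
        omega
    rw [hk0, mul_zero] at hk
    omega
  -- image of nbrs under f
  have hsub : Finset.image f (nbrs n i) ⊆ (Finset.range (4*n)).filter q := by
    intro k hk
    obtain ⟨j, hj, rfl⟩ := Finset.mem_image.mp hk
    refine Finset.mem_filter.mpr ⟨Finset.mem_range.mpr ?_, hpar j hj (f j) (hfval j)⟩
    have h1 := Int.emod_lt_of_pos j hcpos
    have h2 := hfval j
    omega
  have himg : Finset.image f (nbrs n i) = (Finset.range (4*n)).filter q := by
    apply Finset.eq_of_subset_of_card_le hsub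
    rw [Finset.card_image_of_injOn hinj, card_nbrs, hqcard]
  -- transfer the filter count
  have hfil : Finset.image f ((nbrs n i).filter (fun j => φ j = 1)) =
      ((Finset.range (4*n)).filter q).filter (fun k : ℕ => φ (k:ℤ) = 1) := by
    rw [← himg,
      Finset.filter_image (f := f) (s := nbrs n i) (p := fun k : ℕ => φ (k:ℤ) = 1)]
    congr 1
    apply Finset.filter_congr
    intro j _
    rw [hφf j]
  have hinj' : Set.InjOn f ((nbrs n i).filter (fun j => φ j = 1) : Finset ℤ) :=
    hinj.mono (fun x hx => Finset.mem_coe.mpr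
      (Finset.filter_subset _ _ (Finset.mem_coe.mp hx)))
  have hcard2 := Finset.card_image_of_injOn hinj'
  rw [hfil] at hcard2
  rw [← hcard2, Finset.filter_filter]
  exact hcount

/-- Any `4n`-periodic 2-coloring of `ℤ` with exactly `b` white vertices among
the even residues `{0,2,…,4n-2}` and exactly `b` white vertices among the odd
residues `{1,3,…,4n-1}` is a perfect 2-coloring of `Ci_∞(D_n)` with parameter
matrix `((2n-b, b), (2n-b, b))`. -/
theorem balanced_period_perfect (n b : ℕ) (hn : 0 < n) (hb : 0 < b) (hb2 : b < 2*n)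
    (φ : ℤ → Fin 2)
    (hper : ∀ i : ℤ, φ (i + 4*(n:ℤ)) = φ i)
    (heven : ((Finset.range (4*n)).filter (fun i : ℕ => Even i ∧ φ (i : ℤ) = 1)).card = b)
    (hodd : ((Finset.range (4*n)).filter (fun i : ℕ => Odd i ∧ φ (i : ℤ) = 1)).card = b) :
    ∀ i : ℤ, ((nbrs n i).filter (fun j => φ j = 1)).card = b ∧
      ((nbrs n i).filter (fun j => φ j = 0)).card = 2*n - b := by
  have hper' : Function.Periodic φ (4*(n:ℤ)) := fun x => hper x
  have hmod : ∀ j : ℤ, φ (j % (4*(n:ℤ))) = φ j := by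
    intro j
    have h1 : j % (4*(n:ℤ)) = j - (j / (4*(n:ℤ))) * (4*(n:ℤ)) := by
      rw [Int.emod_def]; ring
    rw [h1]
    exact hper'.sub_int_mul_eq (j / (4*(n:ℤ)))
  have hrange : 4*n = 2*(2*n) := by ring
  have hEcard : ((Finset.range (4*n)).filter (fun k => Even k)).card = 2*n := by
    rw [hrange]; exact (parity_count (2*n)).1
  have hOcard : ((Finset.range (4*n)).filter (fun k => Odd k)).card = 2*n := by
    rw [hrange]; exact (parity_count (2*n)).2
  intro i
  have h1 : ((nbrs n i).filter (fun j => φ j = 1)).card = b := by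
    rcases Int.even_or_odd i with hi | hi
    · -- i even: neighbors are odd
      refine count_white n b φ hmod (fun k => Odd k) hodd hOcard i ?_ hn
      intro j hj k hk
      simp only [nbrs, Finset.mem_filter, Finset.mem_Icc] at hj
      have hjodd : Odd j := by
        obtain ⟨a, ha⟩ := hi
        obtain ⟨d, hd⟩ := hj.2
        exact ⟨a + d, by omega⟩
      have : Odd (j % (4*(n:ℤ))) := by
        have h1 : j % (4*(n:ℤ)) = j - (j / (4*(n:ℤ))) * (4*(n:ℤ)) := by
          rw [Int.emod_def]; ring
        obtain ⟨d, hd⟩ := hjodd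
        exact ⟨d - (j / (4*(n:ℤ))) * 2 * n, by rw [h1]; push_cast; ring_nf; omega⟩
      rw [← hk] at this
      exact Int.odd_coe_nat k |>.mp this
    · -- i odd: neighbors are even
      refine count_white n b φ hmod (fun k => Even k) heven hEcard i ?_ hn
      intro j hj k hk
      simp only [nbrs, Finset.mem_filter, Finset.mem_Icc] at hj
      have hjeven : Even j := by
        obtain ⟨a, ha⟩ := hi
        obtain ⟨d, hd⟩ := hj.2
        exact ⟨a + d + 1, by omega⟩
      have : Even (j % (4*(n:ℤ))) := by
        have h1 : j % (4*(n:ℤ)) = j - (j / (4*(n:ℤ))) * (4*(n:ℤ)) := by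
          rw [Int.emod_def]; ring
        obtain ⟨d, hd⟩ := hjeven
        exact ⟨d - (j / (4*(n:ℤ))) * 2 * n, by rw [h1]; push_cast; ring_nf; omega⟩
      rw [← hk] at this
      exact Int.even_coe_nat k |>.mp this
  refine ⟨h1, ?_⟩
  have hsplit := Finset.card_filter_add_card_filter_not
    (s := nbrs n i) (p := fun j => φ j = 1)
  have heq : (nbrs n i).filter (fun j => ¬ φ j = 1) = (nbrs n i).filter (fun j => φ j = 0) := by
    apply Finset.filter_congr
    intro j _
    have : ∀ x : Fin 2, (¬ x = 1) ↔ x = 0 := by decide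
    simpa using this (φ j)
  rw [heq] at hsplit
  have hcard := card_nbrs n i
  omega
end
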